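/- arXiv:2011.04953 — 2 statements merged into one kernel-verified Lean document; each statement's English description precedes it below -/
import Mathlib

section
/- Let A be an n×n symmetric random matrix with independent entries (up to symmetry) where the diagonal entries a_ii ∼ N(0, 2) and off-diagonal entries a_ij ∼ N(0, 1) (i < j). Then for all real x, E[det(x·I_n + A)] = H_n(x), the probabilists' Hermite polynomial of degree n. -/
open Real MeasureTheory ProbabilityTheory

/-- The standard Gaussian density `φ(x) = (1/√(2π)) e^{-x²/2}`. -/
noncomputable def gaussDensity (x : ℝ) : ℝ :=
  (Real.sqrt (2 * Real.pi))⁻¹ * Real.exp (-x ^ 2 / 2)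

/-- The probabilists' Hermite polynomial `H_k(x) = φ(x)⁻¹ (-d/dx)^k φ(x)`. -/
noncomputable def hermiteH (k : ℕ) (x : ℝ) : ℝ :=
  (gaussDensity x)⁻¹ * ((-1 : ℝ) ^ k * iteratedDeriv k gaussDensity x)

/-- A symmetric random matrix built from an iid `N(0,1)` array `ω`:
diagonal entries `√2·ω_ii ∼ N(0,2)`, off-diagonal entries `ω_{min,max} ∼ N(0,1)`,
independent up to symmetry. -/
noncomputable def symGauss2 (n : ℕ) (ω : Fin n → Fin n → ℝ) :
    Matrix (Fin n) (Fin n) ℝ :=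
  Matrix.of fun i j =>
    if i = j then Real.sqrt 2 * ω i i
    else if i < j then ω i j else ω j i

/-! ### Elementary Gaussian integrals over `ℝ` -/

lemma int_mul_exp : ∫ t : ℝ, t * Real.exp (-t^2/2) = 0 := by
  have h := MeasureTheory.integral_neg_eq_self (fun t : ℝ => t * Real.exp (-t^2/2)) (volume : Measure ℝ)
  have h2 : ∫ t : ℝ, -(t * Real.exp (-t^2/2)) = ∫ t : ℝ, t * Real.exp (-t^2/2) := by
    rw [← h]; congr 1; funext t; rw [neg_sq]; ring
  rw [integral_neg] at h2
  linarith

lemma integrable_mul_exp : Integrable (fun t : ℝ => t * Real.exp (-t^2/2)) := by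
  have := integrable_mul_exp_neg_mul_sq (b := (1/2 : ℝ)) (by norm_num)
  convert this using 2 with t
  ring_nf

lemma integrable_exp' : Integrable (fun t : ℝ => Real.exp (-t^2/2)) := by
  have := integrable_exp_neg_mul_sq (b := (1/2 : ℝ)) (by norm_num)
  convert this using 2 with t
  ring_nf

lemma integrable_sq_mul_exp : Integrable (fun t : ℝ => t^2 * Real.exp (-t^2/2)) := by
  have := integrable_rpow_mul_exp_neg_mul_sq (b := (1/2 : ℝ)) (by norm_num) (s := 2) (by norm_num)
  convert this using 2 with t
  rw [show ((2:ℝ) = ((2:ℕ):ℝ)) by norm_num, Real.rpow_natCast]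
  ring_nf

lemma int_sq_mul_exp : ∫ t : ℝ, t^2 * Real.exp (-t^2/2) = ∫ t : ℝ, Real.exp (-t^2/2) := by
  have hderiv : ∀ t : ℝ, HasDerivAt (fun t : ℝ => t * Real.exp (-t^2/2))
      (Real.exp (-t^2/2) - t^2 * Real.exp (-t^2/2)) t := by
    intro t
    have h1 : HasDerivAt (fun t : ℝ => -t^2/2) (-t) t := by
      have := ((hasDerivAt_pow 2 t).neg).div_const 2
      refine this.congr_deriv ?_
      simp; ring
    have h2 := (h1.exp)
    have h3 := (hasDerivAt_id t).mul h2
    refine h3.congr_deriv ?_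
    simp; ring
  have h0 := integral_eq_zero_of_hasDerivAt_of_integrable hderiv
    ((integrable_exp').sub integrable_sq_mul_exp) integrable_mul_exp
  rw [integral_sub integrable_exp' integrable_sq_mul_exp] at h0
  linarith

lemma int_exp' : ∫ t : ℝ, Real.exp (-t^2/2) = Real.sqrt (2 * Real.pi) := by
  have h := integral_gaussian (1/2)
  have : ∫ t : ℝ, Real.exp (-t^2/2) = ∫ t : ℝ, Real.exp (-(1/2) * t^2) := by
    congr 1; funext t; ring_nf
  rw [this, h]
  rw [show (π / (1/2) : ℝ) = 2 * π by ring]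

/-! ### The standard Gaussian measure and its moments -/

noncomputable def stdGauss : Measure ℝ := gaussianReal 0 1

lemma stdGauss_pdf_eq (t : ℝ) :
    gaussianPDFReal 0 1 t = (Real.sqrt (2 * Real.pi))⁻¹ * Real.exp (-t^2/2) := by
  simp [gaussianPDFReal]

lemma stdGauss_eq : stdGauss = volume.withDensity
    (fun t => ENNReal.ofReal (gaussianPDFReal 0 1 t)) := by
  rw [stdGauss, gaussianReal_of_var_ne_zero 0 one_ne_zero]
  rfl

lemma integral_stdGauss (f : ℝ → ℝ) :
    ∫ t, f t ∂stdGauss = ∫ t, gaussianPDFReal 0 1 t * f t := by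
  rw [stdGauss_eq]
  have hm : Measurable fun t => (gaussianPDFReal 0 1 t).toNNReal :=
    (measurable_gaussianPDFReal 0 1).real_toNNReal
  have : (fun t => ENNReal.ofReal (gaussianPDFReal 0 1 t))
      = fun t => ((gaussianPDFReal 0 1 t).toNNReal : ENNReal) := rfl
  rw [this, integral_withDensity_eq_integral_smul hm]
  congr 1; funext t
  simp [NNReal.smul_def, Real.coe_toNNReal _ (gaussianPDFReal_nonneg 0 1 t)]

lemma integrable_stdGauss_iff (f : ℝ → ℝ) :
    Integrable f stdGauss ↔ Integrable (fun t => gaussianPDFReal 0 1 t * f t) := by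
  rw [stdGauss_eq]
  have hm : Measurable fun t => (gaussianPDFReal 0 1 t).toNNReal :=
    (measurable_gaussianPDFReal 0 1).real_toNNReal
  have : (fun t => ENNReal.ofReal (gaussianPDFReal 0 1 t))
      = fun t => ((gaussianPDFReal 0 1 t).toNNReal : ENNReal) := rfl
  rw [this, integrable_withDensity_iff_integrable_smul hm]
  constructor <;> intro h <;>
  · convert h using 1
    rfl
    funext t
    simp [NNReal.smul_def, Real.coe_toNNReal _ (gaussianPDFReal_nonneg 0 1 t)]

instance : IsProbabilityMeasure stdGauss := by
  rw [stdGauss]; infer_instance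

lemma integrable_id_stdGauss : Integrable (fun t : ℝ => t) stdGauss := by
  rw [integrable_stdGauss_iff]
  have : (fun t : ℝ => gaussianPDFReal 0 1 t * t)
      = fun t => (Real.sqrt (2 * Real.pi))⁻¹ * (t * Real.exp (-t^2/2)) := by
    funext t; rw [stdGauss_pdf_eq]; ring
  rw [this]
  exact integrable_mul_exp.const_mul _

lemma int_id_stdGauss : ∫ t, t ∂stdGauss = 0 := by
  rw [integral_stdGauss]
  have : (fun t : ℝ => gaussianPDFReal 0 1 t * t)
      = fun t => (Real.sqrt (2 * Real.pi))⁻¹ * (t * Real.exp (-t^2/2)) := by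
    funext t; rw [stdGauss_pdf_eq]; ring
  rw [this, integral_const_mul, int_mul_exp, mul_zero]

lemma integrable_sq_stdGauss : Integrable (fun t : ℝ => t * t) stdGauss := by
  rw [integrable_stdGauss_iff]
  have : (fun t : ℝ => gaussianPDFReal 0 1 t * (t * t))
      = fun t => (Real.sqrt (2 * Real.pi))⁻¹ * (t^2 * Real.exp (-t^2/2)) := by
    funext t; rw [stdGauss_pdf_eq]; ring
  rw [this]
  exact integrable_sq_mul_exp.const_mul _

lemma int_sq_stdGauss : ∫ t, t * t ∂stdGauss = 1 := by
  rw [integral_stdGauss]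
  have : (fun t : ℝ => gaussianPDFReal 0 1 t * (t * t))
      = fun t => (Real.sqrt (2 * Real.pi))⁻¹ * (t^2 * Real.exp (-t^2/2)) := by
    funext t; rw [stdGauss_pdf_eq]; ring
  rw [this, integral_const_mul, int_sq_mul_exp, int_exp', inv_mul_cancel₀]
  positivity

lemma integrable_affine_stdGauss (x c : ℝ) :
    Integrable (fun t : ℝ => x + c * t) stdGauss :=
  (integrable_const x).add (integrable_id_stdGauss.const_mul c)

lemma int_affine_stdGauss (x c : ℝ) : ∫ t, (x + c * t) ∂stdGauss = x := by
  rw [integral_add (integrable_const x) (integrable_id_stdGauss.const_mul c),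
    integral_const, integral_const_mul, int_id_stdGauss]
  simp

/-! ### A type synonym carrying the Gaussian as volume -/

def RG : Type := ℝ

instance : MeasurableSpace RG := inferInstanceAs (MeasurableSpace ℝ)
noncomputable instance : MeasureSpace RG := ⟨(stdGauss : Measure ℝ)⟩
instance : IsProbabilityMeasure (volume : Measure RG) :=
  inferInstanceAs (IsProbabilityMeasure (gaussianReal 0 1))

lemma integral_double_prod (n : ℕ) (g : Fin n → Fin n → ℝ → ℝ) :
    (∫ ω : Fin n → Fin n → RG, ∏ a, ∏ b, g a b (ω a b)) =
    ∏ a, ∏ b, ∫ t, g a b t ∂stdGauss := by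
  refine (MeasureTheory.integral_fintype_prod_eq_prod
    (f := fun a (η : Fin n → RG) => ∏ b, g a b (η b))).trans ?_
  congr 1; funext a
  refine (@MeasureTheory.integral_fintype_prod_eq_prod _ _ _ _ _
    (fun b (t : RG) => g a b t) (fun _ => MeasureSpace.toMeasurableSpace) (fun _ => (volume : Measure RG)) (fun _ => inferInstance)).trans ?_
  rfl

lemma integrable_double_prod (n : ℕ) (g : Fin n → Fin n → ℝ → ℝ)
    (hg : ∀ a b, Integrable (g a b) stdGauss) :
    Integrable (fun ω : Fin n → Fin n → RG => ∏ a, ∏ b, g a b (ω a b)) := by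
  apply Integrable.fintype_prod (f := fun a (η : Fin n → RG) => ∏ b, g a b (η b))
  intro a
  exact @Integrable.fintype_prod _ _ _ _ _ (fun b (t : RG) => g a b t) _ _ (fun _ => inferInstance) (fun b => hg a b)

/-! ### Per-permutation factors -/

noncomputable def gfac (n : ℕ) (x : ℝ) (σ : Equiv.Perm (Fin n)) (a b : Fin n) (t : ℝ) : ℝ :=
  (if a = b ∧ σ a = a then x + Real.sqrt 2 * t else 1) *
  ((if a < b ∧ σ a = b then t else 1) * (if a < b ∧ σ b = a then t else 1))

lemma entry_eq (n : ℕ) (x : ℝ) (ω : Fin n → Fin n → ℝ) (σ : Equiv.Perm (Fin n)) (i : Fin n) :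
    (x • (1 : Matrix (Fin n) (Fin n) ℝ) + symGauss2 n ω) (σ i) i =
    (if σ i = i then x + Real.sqrt 2 * ω i i else 1) *
    ((if i < σ i then ω i (σ i) else 1) * (if σ i < i then ω (σ i) i else 1)) := by
  rw [Matrix.add_apply, Matrix.smul_apply, smul_eq_mul]
  simp only [symGauss2, Matrix.of_apply]
  rcases lt_trichotomy i (σ i) with h | h | h
  · have hne : σ i ≠ i := ne_of_gt h
    rw [Matrix.one_apply_ne hne, if_neg hne, if_neg (not_lt_of_gt h), if_neg hne,
      if_pos h, if_neg (not_lt_of_gt h)]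
    ring
  · rw [← h, Matrix.one_apply_eq, if_pos rfl, if_pos rfl, if_neg (lt_irrefl (i:Fin n)),
      mul_one, mul_one, mul_one]
  · have hne : σ i ≠ i := ne_of_lt h
    rw [Matrix.one_apply_ne hne, if_neg hne, if_pos h, if_neg hne,
      if_neg (not_lt_of_gt h), if_pos h]
    ring

lemma prod_entries (n : ℕ) (x : ℝ) (ω : Fin n → Fin n → ℝ) (σ : Equiv.Perm (Fin n)) :
    ∏ i, (x • (1 : Matrix (Fin n) (Fin n) ℝ) + symGauss2 n ω) (σ i) i =
    ∏ a, ∏ b, gfac n x σ a b (ω a b) := by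
  have D1 : ∀ a : Fin n, (∏ b, if a = b ∧ σ a = a then x + Real.sqrt 2 * ω a b else 1) =
      if σ a = a then x + Real.sqrt 2 * ω a a else 1 := by
    intro a
    rw [Finset.prod_eq_single a (fun b _ hb => if_neg (fun h => hb h.1.symm))
      (fun h => absurd (Finset.mem_univ a) h)]
    by_cases h : σ a = a <;> simp [h]
  have D2 : ∀ a : Fin n, (∏ b, if a < b ∧ σ a = b then ω a b else 1) =
      if a < σ a then ω a (σ a) else 1 := by
    intro a
    rw [Finset.prod_eq_single (σ a) (fun b _ hb => if_neg (fun h => hb h.2.symm))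
      (fun h => absurd (Finset.mem_univ _) h)]
    by_cases h : a < σ a <;> simp [h]
  have D3 : ∀ b : Fin n, (∏ a, if a < b ∧ σ b = a then ω a b else 1) =
      if σ b < b then ω (σ b) b else 1 := by
    intro b
    rw [Finset.prod_eq_single (σ b) (fun a _ ha => if_neg (fun h => ha h.2.symm))
      (fun h => absurd (Finset.mem_univ _) h)]
    by_cases h : σ b < b <;> simp [h]
  conv_rhs => simp only [gfac, Finset.prod_mul_distrib]
  rw [Finset.prod_comm (f := fun a b => if a < b ∧ σ b = a then ω a b else 1)]
  simp only [D1, D2, D3]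
  rw [← Finset.prod_mul_distrib, ← Finset.prod_mul_distrib]
  exact Finset.prod_congr rfl fun i _ => entry_eq n x ω σ i

def fixCard {n : ℕ} (σ : Equiv.Perm (Fin n)) : ℕ :=
  (Finset.univ.filter fun i => σ i = i).card

section gfacVals

variable {n : ℕ} (x : ℝ) (σ : Equiv.Perm (Fin n))

lemma gfac_diag_fix {a : Fin n} (h : σ a = a) :
    gfac n x σ a a = fun t => x + Real.sqrt 2 * t := by
  funext t; simp [gfac, h]

lemma gfac_diag_nonfix {a : Fin n} (h : σ a ≠ a) :
    gfac n x σ a a = fun _ => 1 := by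
  funext t; simp [gfac, h]

lemma gfac_both {a b : Fin n} (hab : a < b) (h1 : σ a = b) (h2 : σ b = a) :
    gfac n x σ a b = fun t => t * t := by
  funext t
  have hne : a ≠ b := ne_of_lt hab
  have hfa : σ a ≠ a := by rw [h1]; exact hne.symm
  simp [gfac, hab, h1, h2, hne, hfa]

lemma gfac_one₁ {a b : Fin n} (hab : a < b) (h1 : σ a = b) (h2 : σ b ≠ a) :
    gfac n x σ a b = fun t => t := by
  funext t
  have hne : a ≠ b := ne_of_lt hab
  simp [gfac, hab, h1, h2, hne]

lemma gfac_one₂ {a b : Fin n} (hab : a < b) (h1 : σ a ≠ b) (h2 : σ b = a) :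
    gfac n x σ a b = fun t => t := by
  funext t
  have hne : a ≠ b := ne_of_lt hab
  simp [gfac, hab, h1, h2, hne]

lemma gfac_none₁ {a b : Fin n} (hab : a < b) (h1 : σ a ≠ b) (h2 : σ b ≠ a) :
    gfac n x σ a b = fun _ => 1 := by
  funext t
  have hne : a ≠ b := ne_of_lt hab
  simp [gfac, hab, h1, h2, hne]

lemma gfac_none₂ {a b : Fin n} (hab : b < a) :
    gfac n x σ a b = fun _ => 1 := by
  funext t
  have hne : a ≠ b := (ne_of_lt hab).symm
  simp [gfac, hne, not_lt_of_gt hab]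

lemma integrable_gfac (a b : Fin n) : Integrable (gfac n x σ a b) stdGauss := by
  rcases lt_trichotomy a b with hab | hab | hab
  · by_cases h1 : σ a = b <;> by_cases h2 : σ b = a
    · rw [gfac_both x σ hab h1 h2]; exact integrable_sq_stdGauss
    · rw [gfac_one₁ x σ hab h1 h2]; exact integrable_id_stdGauss
    · rw [gfac_one₂ x σ hab h1 h2]; exact integrable_id_stdGauss
    · rw [gfac_none₁ x σ hab h1 h2]; exact integrable_const 1
  · subst hab
    by_cases h : σ a = a
    · rw [gfac_diag_fix x σ h]; exact integrable_affine_stdGauss x (Real.sqrt 2)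
    · rw [gfac_diag_nonfix x σ h]; exact integrable_const 1
  · rw [gfac_none₂ x σ hab]; exact integrable_const 1

lemma int_one' : ∫ _t : ℝ, (1 : ℝ) ∂stdGauss = 1 := by simp

lemma int_gfac_invol (hσ : σ * σ = 1) (a b : Fin n) :
    ∫ t, gfac n x σ a b t ∂stdGauss = if a = b ∧ σ a = a then x else 1 := by
  have hinv : ∀ i, σ (σ i) = i := by
    intro i
    have := Equiv.ext_iff.mp hσ i
    simpa using this
  rcases lt_trichotomy a b with hab | hab | hab
  · rw [if_neg (fun h => (ne_of_lt hab) h.1)]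
    by_cases h1 : σ a = b
    · have h2 : σ b = a := by rw [← h1, hinv]
      rw [gfac_both x σ hab h1 h2]
      exact int_sq_stdGauss
    · have h2 : σ b ≠ a := fun h => h1 (by rw [← h, hinv])
      rw [gfac_none₁ x σ hab h1 h2]
      exact int_one'
  · subst hab
    by_cases h : σ a = a
    · rw [if_pos ⟨rfl, h⟩, gfac_diag_fix x σ h]
      exact int_affine_stdGauss x (Real.sqrt 2)
    · rw [if_neg (fun hh => h hh.2), gfac_diag_nonfix x σ h]
      exact int_one'
  · rw [if_neg (fun h => (ne_of_lt hab) h.1.symm), gfac_none₂ x σ hab]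
    exact int_one'

lemma prod_int_gfac :
    (∏ a, ∏ b, ∫ t, gfac n x σ a b t ∂stdGauss) =
      if σ * σ = 1 then x ^ fixCard σ else 0 := by
  by_cases hσ : σ * σ = 1
  · rw [if_pos hσ]
    have step : ∀ a : Fin n, (∏ b, ∫ t, gfac n x σ a b t ∂stdGauss)
        = if σ a = a then x else 1 := by
      intro a
      rw [Finset.prod_congr rfl fun b _ => int_gfac_invol x σ hσ a b]
      rw [Finset.prod_eq_single a (fun b _ hb => if_neg (fun h => hb h.1.symm))
        (fun h => absurd (Finset.mem_univ a) h)]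
      by_cases h : σ a = a <;> simp [h]
    rw [Finset.prod_congr rfl fun a _ => step a, ← Finset.prod_filter, Finset.prod_const]
    rfl
  · rw [if_neg hσ]
    have : ∃ i, σ (σ i) ≠ i := by
      by_contra h
      push_neg at h
      exact hσ (by ext i; simp [Equiv.Perm.mul_apply, h i])
    obtain ⟨i, hi⟩ := this
    have hne : σ i ≠ i := fun h => hi (by rw [h, h])
    rcases lt_or_gt_of_ne hne with hlt | hgt
    · refine Finset.prod_eq_zero (Finset.mem_univ (σ i)) ?_
      refine Finset.prod_eq_zero (Finset.mem_univ i) ?_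
      rw [gfac_one₂ x σ hlt hi rfl]
      exact int_id_stdGauss
    · refine Finset.prod_eq_zero (Finset.mem_univ i) ?_
      refine Finset.prod_eq_zero (Finset.mem_univ (σ i)) ?_
      rw [gfac_one₁ x σ hgt rfl hi]
      exact int_id_stdGauss

open Equiv Polynomial

noncomputable def invSum (n : ℕ) : Polynomial ℝ :=
  ∑ σ : Equiv.Perm (Fin n),
    if σ * σ = 1 then Polynomial.C ((Equiv.Perm.sign σ : ℤ) : ℝ) * Polynomial.X ^ fixCard σ
    else 0

lemma fixCard_eq_sum {n : ℕ} (σ : Equiv.Perm (Fin n)) :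
    fixCard σ = ∑ i, if σ i = i then 1 else 0 := by
  rw [fixCard, Finset.card_filter]

lemma invol_iff {n : ℕ} (σ : Equiv.Perm (Fin n)) :
    σ * σ = 1 ↔ ∀ i, σ (σ i) = i := by
  constructor
  · intro h i
    have := Equiv.ext_iff.mp h i
    simpa using this
  · intro h
    ext i
    simp [Equiv.Perm.mul_apply, h i]

-- p = 0 case facts
lemma D0_apply_succ {n : ℕ} (τ : Equiv.Perm (Fin n)) (i : Fin n) :
    Equiv.Perm.decomposeFin.symm ((0 : Fin (n+1)), τ) i.succ = (τ i).succ := by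
  rw [Equiv.Perm.decomposeFin_symm_apply_succ, Equiv.swap_self]
  rfl

lemma D0_invol_iff {n : ℕ} (τ : Equiv.Perm (Fin n)) :
    (Equiv.Perm.decomposeFin.symm ((0 : Fin (n+1)), τ)) *
      (Equiv.Perm.decomposeFin.symm ((0 : Fin (n+1)), τ)) = 1 ↔ τ * τ = 1 := by
  set σ := Equiv.Perm.decomposeFin.symm ((0 : Fin (n+1)), τ) with hσ
  rw [invol_iff, invol_iff]
  constructor
  · intro h i
    have := h i.succ
    rw [D0_apply_succ, D0_apply_succ] at this
    exact Fin.succ_injective _ this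
  · intro h i
    induction i using Fin.cases with
    | zero => rw [Equiv.Perm.decomposeFin_symm_apply_zero, Equiv.Perm.decomposeFin_symm_apply_zero]
    | succ k => rw [D0_apply_succ, D0_apply_succ, h]

lemma D0_fixCard {n : ℕ} (τ : Equiv.Perm (Fin n)) :
    fixCard (Equiv.Perm.decomposeFin.symm ((0 : Fin (n+1)), τ)) = fixCard τ + 1 := by
  rw [fixCard_eq_sum, fixCard_eq_sum, Fin.sum_univ_succ,
    Equiv.Perm.decomposeFin_symm_apply_zero, if_pos rfl]
  have : ∀ k : Fin n, (if Equiv.Perm.decomposeFin.symm ((0 : Fin (n+1)), τ) k.succ = k.succ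
      then 1 else 0) = if τ k = k then 1 else 0 := by
    intro k
    rw [D0_apply_succ]
    by_cases h : τ k = k
    · rw [if_pos h, if_pos (by rw [h])]
    · rw [if_neg h, if_neg (fun hh => h (Fin.succ_injective _ hh))]
  rw [Finset.sum_congr rfl (fun k _ => this k)]
  ring

-- p = j.succ case facts
lemma Dsucc_apply_succ {n : ℕ} (τ : Equiv.Perm (Fin n)) (j i : Fin n) :
    Equiv.Perm.decomposeFin.symm (j.succ, τ) i.succ = Equiv.swap 0 j.succ (τ i).succ :=
  Equiv.Perm.decomposeFin_symm_apply_succ τ j.succ i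

lemma Dsucc_apply_succ_of_eq {n : ℕ} (τ : Equiv.Perm (Fin n)) {j i : Fin n} (h : τ i = j) :
    Equiv.Perm.decomposeFin.symm (j.succ, τ) i.succ = 0 := by
  rw [Dsucc_apply_succ, h, Equiv.swap_apply_right]

lemma Dsucc_apply_succ_of_ne {n : ℕ} (τ : Equiv.Perm (Fin n)) {j i : Fin n} (h : τ i ≠ j) :
    Equiv.Perm.decomposeFin.symm (j.succ, τ) i.succ = (τ i).succ := by
  rw [Dsucc_apply_succ]
  exact Equiv.swap_apply_of_ne_of_ne (Fin.succ_ne_zero _)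
    (fun hh => h (Fin.succ_injective _ hh))

lemma Dsucc_invol_iff {n : ℕ} (τ : Equiv.Perm (Fin n)) (j : Fin n) :
    (Equiv.Perm.decomposeFin.symm (j.succ, τ)) * (Equiv.Perm.decomposeFin.symm (j.succ, τ)) = 1
      ↔ (τ * τ = 1 ∧ τ j = j) := by
  rw [invol_iff, invol_iff]
  constructor
  · intro h
    have hj : τ j = j := by
      have h0 := h 0
      rw [Equiv.Perm.decomposeFin_symm_apply_zero] at h0
      by_contra hj
      rw [Dsucc_apply_succ_of_ne τ hj] at h0
      exact Fin.succ_ne_zero _ h0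
    refine ⟨fun i => ?_, hj⟩
    by_cases hij : i = j
    · rw [hij, hj, hj]
    · have hti : τ i ≠ j := fun hh => hij (τ.injective (hh.trans hj.symm))
      have hs := h i.succ
      rw [Dsucc_apply_succ_of_ne τ hti] at hs
      by_cases htt : τ (τ i) = j
      · rw [Dsucc_apply_succ_of_eq τ htt] at hs
        exact absurd hs.symm (Fin.succ_ne_zero i)
      · rw [Dsucc_apply_succ_of_ne τ htt] at hs
        exact Fin.succ_injective _ hs
  · rintro ⟨h, hj⟩ i
    induction i using Fin.cases with
    | zero =>
      rw [Equiv.Perm.decomposeFin_symm_apply_zero, Dsucc_apply_succ_of_eq τ hj]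
    | succ k =>
      by_cases hk : τ k = j
      · have hkj : k = j := by
          have := h k
          rw [hk, hj] at this
          exact this.symm ▸ rfl
        rw [Dsucc_apply_succ_of_eq τ hk, Equiv.Perm.decomposeFin_symm_apply_zero, hkj]
      · rw [Dsucc_apply_succ_of_ne τ hk]
        have htk : τ (τ k) ≠ j := by
          intro hh
          rw [h k] at hh
          exact hk (by rw [hh, hj])
        rw [Dsucc_apply_succ_of_ne τ htk, h k]

lemma Dsucc_fixCard {n : ℕ} (τ : Equiv.Perm (Fin n)) {j : Fin n} (hj : τ j = j) :
    fixCard (Equiv.Perm.decomposeFin.symm (j.succ, τ)) + 1 = fixCard τ := by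
  rw [fixCard_eq_sum, fixCard_eq_sum, Fin.sum_univ_succ,
    Equiv.Perm.decomposeFin_symm_apply_zero,
    if_neg (Fin.succ_ne_zero j), zero_add]
  have key : ∀ k : Fin n,
      (if Equiv.Perm.decomposeFin.symm (j.succ, τ) k.succ = k.succ then 1 else 0)
        = if k ≠ j ∧ τ k = k then 1 else 0 := by
    intro k
    by_cases hk : k = j
    · subst hk
      rw [Dsucc_apply_succ_of_eq τ hj, if_neg (fun h => Fin.succ_ne_zero k h.symm),
        if_neg (fun h => h.1 rfl)]
    · have htk : τ k ≠ j := fun h => hk (τ.injective (h.trans hj.symm))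
      rw [Dsucc_apply_succ_of_ne τ htk]
      by_cases h2 : τ k = k
      · rw [if_pos (by rw [h2]), if_pos ⟨hk, h2⟩]
      · rw [if_neg (fun h => h2 (Fin.succ_injective _ h)), if_neg (fun h => h2 h.2)]
  rw [Finset.sum_congr rfl (fun k _ => key k)]
  have hjmem : j ∈ Finset.univ := Finset.mem_univ j
  rw [← Finset.add_sum_erase _ _ hjmem, ← Finset.add_sum_erase _ _ hjmem]
  rw [if_neg (fun h => h.1 rfl), if_pos hj, zero_add]
  rw [add_comm]
  congr 1
  refine Finset.sum_congr rfl fun k hk => ?_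
  have : k ≠ j := Finset.ne_of_mem_erase hk
  by_cases h2 : τ k = k
  · rw [if_pos ⟨this, h2⟩, if_pos h2]
  · rw [if_neg (fun h => h2 h.2), if_neg h2]

lemma invSum_zero : invSum 0 = 1 := by
  rw [invSum]
  have huniq : ∀ σ : Equiv.Perm (Fin 0), σ = 1 := fun σ => Equiv.ext (fun i => i.elim0)
  rw [Finset.sum_eq_single 1 (fun σ _ hσ => absurd (huniq σ) hσ)
    (fun h => absurd (Finset.mem_univ _) h)]
  have hfix : fixCard (1 : Equiv.Perm (Fin 0)) = 0 := by
    rw [fixCard_eq_sum]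
    simp
  rw [if_pos (one_mul 1), hfix]
  simp

lemma invSum_succ (n : ℕ) : invSum (n + 1) =
    X * invSum n - derivative (invSum n) := by
  classical
  set F : Equiv.Perm (Fin (n+1)) → Polynomial ℝ := fun σ =>
    if σ * σ = 1 then Polynomial.C ((Equiv.Perm.sign σ : ℤ) : ℝ) * Polynomial.X ^ fixCard σ
    else 0 with hF
  have h1 : invSum (n+1) = ∑ pτ : Fin (n+1) × Equiv.Perm (Fin n),
      F (Equiv.Perm.decomposeFin.symm pτ) := by
    rw [invSum, ← Equiv.sum_comp (Equiv.Perm.decomposeFin.symm) F]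
  rw [h1, Fintype.sum_prod_type, Fin.sum_univ_succ]
  have hA : ∀ τ : Equiv.Perm (Fin n), F (Equiv.Perm.decomposeFin.symm (0, τ)) =
      X * (if τ * τ = 1 then Polynomial.C ((Equiv.Perm.sign τ : ℤ) : ℝ)
        * Polynomial.X ^ fixCard τ else 0) := by
    intro τ
    rw [hF]
    simp only [D0_invol_iff, D0_fixCard, Equiv.Perm.decomposeFin.symm_sign, if_true, one_mul]
    by_cases h : τ * τ = 1
    · rw [if_pos h, if_pos h]; ring
    · rw [if_neg h, if_neg h, mul_zero]
  have hB : ∀ (j : Fin n) (τ : Equiv.Perm (Fin n)),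
      F (Equiv.Perm.decomposeFin.symm (j.succ, τ)) =
      if τ * τ = 1 ∧ τ j = j then
        Polynomial.C (-((Equiv.Perm.sign τ : ℤ) : ℝ)) * Polynomial.X ^ (fixCard τ - 1)
      else 0 := by
    intro j τ
    rw [hF]
    simp only [Dsucc_invol_iff]
    by_cases h : τ * τ = 1 ∧ τ j = j
    · rw [if_pos h, if_pos h]
      have hfix : fixCard (Equiv.Perm.decomposeFin.symm (j.succ, τ)) = fixCard τ - 1 := by
        have := Dsucc_fixCard τ h.2
        omega
      rw [hfix, Equiv.Perm.decomposeFin.symm_sign, if_neg (Fin.succ_ne_zero j)]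
      congr 2
      push_cast [Units.val_neg]
      ring
    · rw [if_neg h, if_neg h]
  have hAsum : (∑ τ : Equiv.Perm (Fin n), F (Equiv.Perm.decomposeFin.symm (0, τ)))
      = X * invSum n := by
    rw [invSum, Finset.mul_sum]
    exact Finset.sum_congr rfl fun τ _ => hA τ
  have hBsum : (∑ j : Fin n, ∑ τ : Equiv.Perm (Fin n),
      F (Equiv.Perm.decomposeFin.symm (j.succ, τ))) = - derivative (invSum n) := by
    rw [Finset.sum_comm]
    rw [invSum, derivative_sum, ← Finset.sum_neg_distrib]
    refine Finset.sum_congr rfl fun τ _ => ?_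
    rw [Finset.sum_congr rfl fun j _ => hB j τ]
    by_cases h : τ * τ = 1
    · have hcond : ∀ j : Fin n, (if τ * τ = 1 ∧ τ j = j then
          Polynomial.C (-((Equiv.Perm.sign τ : ℤ) : ℝ)) * Polynomial.X ^ (fixCard τ - 1)
          else 0) = if τ j = j then
          Polynomial.C (-((Equiv.Perm.sign τ : ℤ) : ℝ)) * Polynomial.X ^ (fixCard τ - 1)
          else 0 := by
        intro j
        by_cases hj : τ j = j
        · rw [if_pos ⟨h, hj⟩, if_pos hj]
        · rw [if_neg (fun hh => hj hh.2), if_neg hj]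
      rw [Finset.sum_congr rfl fun j _ => hcond j, ← Finset.sum_filter, Finset.sum_const,
        if_pos h, derivative_C_mul, derivative_X_pow]
      have hcard : (Finset.univ.filter fun j => τ j = j).card = fixCard τ := rfl
      rw [hcard, nsmul_eq_mul, map_neg, Polynomial.C_eq_natCast]
      ring
    · have hcond : ∀ j : Fin n, (if τ * τ = 1 ∧ τ j = j then
          Polynomial.C (-((Equiv.Perm.sign τ : ℤ) : ℝ)) * Polynomial.X ^ (fixCard τ - 1)
          else 0) = 0 := fun j => if_neg (fun hh => h hh.1)
      rw [Finset.sum_congr rfl fun j _ => hcond j, Finset.sum_const_zero, if_neg h,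
        derivative_zero, neg_zero]
  rw [hAsum, hBsum, sub_eq_add_neg]

lemma invSum_eq_hermite (n : ℕ) :
    invSum n = (Polynomial.hermite n).map (Int.castRingHom ℝ) := by
  induction n with
  | zero => rw [invSum_zero, Polynomial.hermite_zero]; simp
  | succ n ih =>
    rw [invSum_succ, Polynomial.hermite_succ, ih, Polynomial.map_sub, Polynomial.map_mul,
      Polynomial.map_X, derivative_map]

lemma iter_deriv_const_mul (c : ℝ) (f : ℝ → ℝ) (n : ℕ) :
    deriv^[n] (fun y => c * f y) = fun x => c * deriv^[n] f x := by
  induction n with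
  | zero => rfl
  | succ n ih =>
    rw [Function.iterate_succ_apply', Function.iterate_succ_apply', ih]
    funext x
    rw [deriv_const_mul_field]

lemma hermiteH_eq (n : ℕ) (x : ℝ) :
    hermiteH n x = Polynomial.eval x ((Polynomial.hermite n).map (Int.castRingHom ℝ)) := by
  have hd : gaussDensity = fun y => (Real.sqrt (2 * Real.pi))⁻¹ * Real.exp (-(y ^ 2 / 2)) := by
    funext y; rw [gaussDensity, neg_div]
  have he : Polynomial.eval x ((Polynomial.hermite n).map (Int.castRingHom ℝ))
      = aeval x (Polynomial.hermite n) := by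
    rw [Polynomial.aeval_def, Polynomial.eval_map]
    rfl
  rw [he, hermiteH, hd, iteratedDeriv_eq_iterate, iter_deriv_const_mul]
  beta_reduce
  rw [Polynomial.deriv_gaussian_eq_hermite_mul_gaussian]
  set c := (Real.sqrt (2 * Real.pi))⁻¹ with hc
  set e := Real.exp (-(x ^ 2 / 2)) with he'
  set h := (aeval x (Polynomial.hermite n) : ℝ)
  have hcne : c ≠ 0 := by
    rw [hc]
    positivity
  have hene : e ≠ 0 := Real.exp_ne_zero _
  have hpow : ((-1 : ℝ) ^ n) * ((-1 : ℝ) ^ n) = 1 := by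
    rw [← mul_pow]
    norm_num
  field_simp
  ring_nf
  rw [show (n * 2) = 2 * n by ring, pow_mul]
  norm_num


lemma det_integral_eq_sum (n : ℕ) (x : ℝ) :
    (∫ ω : Fin n → Fin n → ℝ,
        (x • (1 : Matrix (Fin n) (Fin n) ℝ) + symGauss2 n ω).det
        ∂(Measure.pi fun _ : Fin n => Measure.pi fun _ : Fin n => gaussianReal 0 1)) =
      ∑ σ : Equiv.Perm (Fin n), ((Equiv.Perm.sign σ : ℤ) : ℝ) *
        (if σ * σ = 1 then x ^ fixCard σ else 0) := by
  have h0 : (∫ ω : Fin n → Fin n → ℝ,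
      (x • (1 : Matrix (Fin n) (Fin n) ℝ) + symGauss2 n ω).det
      ∂(Measure.pi fun _ : Fin n => Measure.pi fun _ : Fin n => gaussianReal 0 1)) =
      ∫ ω : Fin n → Fin n → RG, (x • (1 : Matrix (Fin n) (Fin n) ℝ) + symGauss2 n ω).det := rfl
  rw [h0]
  have h1 : (fun ω : Fin n → Fin n → RG =>
      (x • (1 : Matrix (Fin n) (Fin n) ℝ) + symGauss2 n ω).det)
      = fun ω => ∑ σ : Equiv.Perm (Fin n), ((Equiv.Perm.sign σ : ℤ) : ℝ) *
          ∏ a, ∏ b, gfac n x σ a b (ω a b) := by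
    funext ω
    rw [Matrix.det_apply]
    refine Finset.sum_congr rfl fun σ _ => ?_
    rw [← prod_entries n x ω σ, Units.smul_def, zsmul_eq_mul]
  rw [h1, integral_finset_sum _ (fun σ _ =>
    ((integrable_double_prod n (gfac n x σ) (integrable_gfac x σ)).const_mul _))]
  refine Finset.sum_congr rfl fun σ _ => ?_
  rw [integral_const_mul, integral_double_prod, prod_int_gfac]

/-- `E[det(x I_n + A)] = H_n(x)` for a symmetric Gaussian matrix `A` with
`a_ii ∼ N(0,2)`, `a_ij ∼ N(0,1)` (i<j), independent up to symmetry. -/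
theorem stmt_5 (n : ℕ) (x : ℝ) :
    (∫ ω : Fin n → Fin n → ℝ,
        (x • (1 : Matrix (Fin n) (Fin n) ℝ) + symGauss2 n ω).det
        ∂(Measure.pi fun _ : Fin n => Measure.pi fun _ : Fin n => gaussianReal 0 1)) =
      hermiteH n x := by
  rw [det_integral_eq_sum, hermiteH_eq, ← invSum_eq_hermite, invSum,
    Polynomial.eval_finset_sum]
  refine Finset.sum_congr rfl fun σ _ => ?_
  by_cases h : σ * σ = 1
  · rw [if_pos h, if_pos h, Polynomial.eval_mul, Polynomial.eval_C, Polynomial.eval_pow,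
      Polynomial.eval_X]
  · rw [if_neg h, if_neg h, mul_zero, Polynomial.eval_zero]
end gfacVals
end

section
/- Let T ∼ N_n(0, I_n) and Θ ∈ Sym(n); let v_0, v_1, v_2, … be nonnegative integers with v = Σ_{j≥0} v_j. Then E[∏_{j≥0}(TᵀΘʲT)^{v_j}] = E[‖T‖^{2v}] · E[∏_{j≥1}(TᵀΘʲT)^{v_j}] / E[‖T‖^{2(v−v_0)}]; i.e., ‖T‖² factors out because the direction T/‖T‖ is independent of ‖T‖. -/
open Real MeasureTheory ProbabilityTheory MvPolynomial
open scoped ENNReal NNReal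

/-- The quadratic form `TᵀMT`. -/
def quadForm {n : ℕ} (M : Matrix (Fin n) (Fin n) ℝ) (t : Fin n → ℝ) : ℝ :=
  ∑ i, ∑ j, t i * M i j * t j


noncomputable def gm (k : ℕ) : ℝ := ∫ x, x ^ k ∂(gaussianReal 0 1)

lemma integrable_pow_exp (k : ℕ) :
    Integrable (fun x : ℝ => x ^ k * Real.exp (-(2⁻¹ : ℝ) * x ^ 2)) := by
  have := integrable_rpow_mul_exp_neg_mul_sq (b := 2⁻¹) (by norm_num) (s := (k : ℝ))
    (lt_of_lt_of_le (by norm_num) (Nat.cast_nonneg k))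
  simpa [Real.rpow_natCast] using this

lemma pdf_eq (x : ℝ) :
    gaussianPDFReal 0 1 x = (Real.sqrt (2 * π))⁻¹ * Real.exp (-(2⁻¹ : ℝ) * x ^ 2) := by
  simp only [gaussianPDFReal, NNReal.coe_one, mul_one, sub_zero]
  rw [show -x ^ 2 / (2 : ℝ) = -(2⁻¹ : ℝ) * x ^ 2 by ring]

lemma gaussianPDF_eq_coe :
    gaussianPDF 0 1 = fun x => ((fun x => (gaussianPDFReal 0 1 x).toNNReal) x : ℝ≥0∞) := by
  funext x; simp [gaussianPDF, ENNReal.ofReal]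

lemma integral_gauss_eq (g : ℝ → ℝ) :
    ∫ x, g x ∂(gaussianReal 0 1) = ∫ x, gaussianPDFReal 0 1 x * g x := by
  rw [gaussianReal_of_var_ne_zero 0 one_ne_zero]
  have hm : Measurable fun x => (gaussianPDFReal 0 1 x).toNNReal :=
    (measurable_gaussianPDFReal 0 1).real_toNNReal
  rw [gaussianPDF_eq_coe, integral_withDensity_eq_integral_smul hm]
  congr 1; funext x
  simp [NNReal.smul_def, Real.coe_toNNReal _ (gaussianPDFReal_nonneg 0 1 x)]

lemma integrable_pow_gauss (k : ℕ) :
    Integrable (fun x : ℝ => x ^ k) (gaussianReal 0 1) := by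
  rw [gaussianReal_of_var_ne_zero 0 one_ne_zero]
  have hm : Measurable fun x => (gaussianPDFReal 0 1 x).toNNReal :=
    (measurable_gaussianPDFReal 0 1).real_toNNReal
  rw [gaussianPDF_eq_coe, integrable_withDensity_iff_integrable_smul hm]
  have : (fun x : ℝ => (gaussianPDFReal 0 1 x).toNNReal • x ^ k)
      = fun x : ℝ => (Real.sqrt (2 * π))⁻¹ * (x ^ k * Real.exp (-(2⁻¹ : ℝ) * x ^ 2)) := by
    funext x
    rw [NNReal.smul_def, Real.coe_toNNReal _ (gaussianPDFReal_nonneg 0 1 x), pdf_eq,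
      smul_eq_mul]
    ring
  rw [this]
  exact (integrable_pow_exp k).const_mul _

lemma J_rec (k : ℕ) :
    (∫ x : ℝ, x ^ (k + 2) * Real.exp (-(2⁻¹ : ℝ) * x ^ 2))
      = (k + 1) * ∫ x : ℝ, x ^ k * Real.exp (-(2⁻¹ : ℝ) * x ^ 2) := by
  set f := fun x : ℝ => x ^ (k + 1) * Real.exp (-(2⁻¹ : ℝ) * x ^ 2) with hf
  set f' := fun x : ℝ => (k + 1 : ℝ) * (x ^ k * Real.exp (-(2⁻¹ : ℝ) * x ^ 2))
      - x ^ (k + 2) * Real.exp (-(2⁻¹ : ℝ) * x ^ 2) with hf'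
  have hderiv : ∀ x, HasDerivAt f (f' x) x := by
    intro x
    have he : HasDerivAt (fun x : ℝ => Real.exp (-(2⁻¹ : ℝ) * x ^ 2))
        (Real.exp (-(2⁻¹ : ℝ) * x ^ 2) * (-(2⁻¹ : ℝ) * (2 * x ^ 1))) x :=
      (((hasDerivAt_pow 2 x)).const_mul (-(2⁻¹ : ℝ))).exp
    have h1 := (hasDerivAt_pow (k + 1) x).mul he
    have h2 : (↑(k + 1) * x ^ (k + 1 - 1) * Real.exp (-(2⁻¹ : ℝ) * x ^ 2)
        + x ^ (k + 1) * (Real.exp (-(2⁻¹ : ℝ) * x ^ 2) * (-(2⁻¹ : ℝ) * (2 * x ^ 1)))) = f' x := by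
      simp only [Nat.add_sub_cancel, hf']
      push_cast
      ring
    exact h2 ▸ h1
  have hint' : Integrable f' :=
    ((integrable_pow_exp k).const_mul _).sub (integrable_pow_exp (k + 2))
  have h0 : ∫ x, f' x = 0 :=
    integral_eq_zero_of_hasDerivAt_of_integrable hderiv hint' (integrable_pow_exp (k + 1))
  rw [hf'] at h0
  rw [integral_sub ((integrable_pow_exp k).const_mul _) (integrable_pow_exp (k + 2))] at h0
  rw [integral_const_mul] at h0
  linarith

lemma gm_rec (k : ℕ) : gm (k + 2) = (k + 1) * gm k := by
  simp only [gm, integral_gauss_eq]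
  simp only [pdf_eq]
  have h1 : ∀ j : ℕ, (∫ x : ℝ, (Real.sqrt (2 * π))⁻¹ * Real.exp (-(2⁻¹ : ℝ) * x ^ 2) * x ^ j)
      = (Real.sqrt (2 * π))⁻¹ * ∫ x : ℝ, x ^ j * Real.exp (-(2⁻¹ : ℝ) * x ^ 2) := by
    intro j
    rw [← integral_const_mul]
    congr 1; funext x; ring
  rw [h1, h1, J_rec]
  ring


variable {ν : Measure ℝ} [SigmaFinite ν]

lemma integral_pi_prod' : ∀ (n : ℕ) (f : Fin n → ℝ → ℝ),
    ∫ x : Fin n → ℝ, ∏ i, f i (x i) ∂(Measure.pi fun _ => ν) = ∏ i, ∫ y, f i y ∂ν := by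
  intro n
  induction n with
  | zero =>
      intro f
      simp [Measure.pi_of_empty (fun _ : Fin 0 => ν) (fun i => i.elim0)]
  | succ n ih =>
      intro f
      calc
        ∫ x : Fin (n+1) → ℝ, ∏ i, f i (x i) ∂(Measure.pi fun _ => ν)
            = ∫ p : ℝ × (Fin n → ℝ), f 0 p.1 * ∏ i : Fin n, f i.succ (p.2 i)
              ∂(ν.prod (Measure.pi fun _ => ν)) := by
          rw [← ((measurePreserving_piFinSuccAbove (fun _ : Fin (n+1) => ν) 0).symm).integral_comp']
          simp_rw [MeasurableEquiv.piFinSuccAbove_symm_apply, Fin.insertNthEquiv,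
            Fin.prod_univ_succ, Fin.insertNth_zero, Equiv.coe_fn_mk, Fin.cons_succ, Fin.cons_zero]
          simp only [cast_eq]
        _ = (∫ y, f 0 y ∂ν) * ∏ i : Fin n, ∫ y, f i.succ y ∂ν := by
          rw [← ih fun i => f i.succ, ← integral_prod_mul]
        _ = ∏ i, ∫ y, f i y ∂ν := by rw [Fin.prod_univ_succ]

lemma integrable_pi_prod' : ∀ (n : ℕ) (f : Fin n → ℝ → ℝ), (∀ i, Integrable (f i) ν) →
    Integrable (fun x : Fin n → ℝ => ∏ i, f i (x i)) (Measure.pi fun _ => ν) := by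
  intro n
  induction n with
  | zero =>
      intro f _
      rw [Measure.pi_of_empty (fun _ : Fin 0 => ν) Fin.elim0]
      simp only [Finset.univ_eq_empty, Finset.prod_empty]
      exact integrable_const _
  | succ n ih =>
      intro f hf
      have h1 : Integrable (fun p : ℝ × (Fin n → ℝ) => f 0 p.1 * ∏ i : Fin n, f i.succ (p.2 i))
          (ν.prod (Measure.pi fun _ => ν)) :=
        (hf 0).mul_prod (ih (fun i => f i.succ) fun i => hf i.succ)
      have h2 := ((measurePreserving_piFinSuccAbove (fun _ : Fin (n+1) => ν) 0).integrable_comp_emb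
        (MeasurableEquiv.measurableEmbedding _)).2 h1
      have : ((fun p : ℝ × (Fin n → ℝ) => f 0 p.1 * ∏ i : Fin n, f i.succ (p.2 i)) ∘
          (MeasurableEquiv.piFinSuccAbove (fun _ : Fin (n+1) => ℝ) 0))
          = fun x : Fin (n+1) → ℝ => ∏ i, f i (x i) := by
        funext x
        simp only [Function.comp_apply, MeasurableEquiv.piFinSuccAbove_apply, Fin.removeNth,
          Fin.zero_succAbove, Fin.prod_univ_succ]
        simp [Fin.insertNthEquiv, Fin.removeNth, Fin.zero_succAbove, Fin.tail]
      rwa [this] at h2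






noncomputable abbrev gmeas (n : ℕ) : Measure (Fin n → ℝ) := Measure.pi fun _ : Fin n => gaussianReal 0 1

noncomputable def Spoly (n : ℕ) : MvPolynomial (Fin n) ℝ := ∑ i, X i ^ 2

lemma eval_Spoly {n : ℕ} (x : Fin n → ℝ) : eval x (Spoly n) = ∑ i, x i ^ 2 := by
  simp [Spoly]

lemma Spoly_hom (n : ℕ) : (Spoly n).IsHomogeneous 2 :=
  IsHomogeneous.sum _ _ _ fun i _ => by
    simpa using (isHomogeneous_X ℝ i).pow 2

lemma integrable_mono {n : ℕ} (d : Fin n → ℕ) :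
    Integrable (fun x : Fin n → ℝ => ∏ i, x i ^ d i) (gmeas n) :=
  integrable_pi_prod' n (fun i y => y ^ d i) fun i => integrable_pow_gauss (d i)

lemma integral_monom {n : ℕ} (d : Fin n → ℕ) :
    ∫ x, ∏ i, x i ^ d i ∂(gmeas n) = ∏ i, gm (d i) :=
  integral_pi_prod' n (fun i y => y ^ d i)

lemma prod_update {n : ℕ} (d : Fin n → ℕ) (l : Fin n) (x : Fin n → ℝ) :
    (∏ i, x i ^ (Function.update d l (d l + 2) i)) = (∏ i, x i ^ d i) * x l ^ 2 := by
  have herase : (∏ i ∈ Finset.univ.erase l, x i ^ (Function.update d l (d l + 2) i))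
      = ∏ i ∈ Finset.univ.erase l, x i ^ d i :=
    Finset.prod_congr rfl fun i hi => by
      rw [Function.update_of_ne (Finset.ne_of_mem_erase hi)]
  rw [← Finset.mul_prod_erase _ (fun i => x i ^ (Function.update d l (d l + 2) i))
      (Finset.mem_univ l),
    ← Finset.mul_prod_erase _ (fun i => x i ^ d i) (Finset.mem_univ l),
    herase, Function.update_self, pow_add]
  ring

lemma integral_mono_mul_sq {n : ℕ} (d : Fin n → ℕ) (l : Fin n) :
    ∫ x, (∏ i, x i ^ d i) * x l ^ 2 ∂(gmeas n) = ((d l : ℝ) + 1) * ∏ i, gm (d i) := by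
  have h1 : (fun x : Fin n → ℝ => (∏ i, x i ^ d i) * x l ^ 2)
      = fun x => ∏ i, x i ^ (Function.update d l (d l + 2) i) := by
    funext x; rw [prod_update]
  rw [h1, integral_monom]
  have herase : (∏ i ∈ Finset.univ.erase l, gm (Function.update d l (d l + 2) i))
      = ∏ i ∈ Finset.univ.erase l, gm (d i) :=
    Finset.prod_congr rfl fun i hi => by
      rw [Function.update_of_ne (Finset.ne_of_mem_erase hi)]
  rw [← Finset.mul_prod_erase _ (fun i => gm (Function.update d l (d l + 2) i))
      (Finset.mem_univ l),
    ← Finset.mul_prod_erase _ (fun i => gm (d i)) (Finset.mem_univ l),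
    herase, Function.update_self, gm_rec]
  ring

lemma integrable_mono_mul_sq {n : ℕ} (d : Fin n → ℕ) (l : Fin n) :
    Integrable (fun x : Fin n → ℝ => (∏ i, x i ^ d i) * x l ^ 2) (gmeas n) := by
  have h1 : (fun x : Fin n → ℝ => (∏ i, x i ^ d i) * x l ^ 2)
      = fun x => ∏ i, x i ^ (Function.update d l (d l + 2) i) := by
    funext x; rw [prod_update]
  rw [h1]; exact integrable_mono _

lemma integrable_mono_mul_S {n : ℕ} (d : Fin n → ℕ) :
    Integrable (fun x : Fin n → ℝ => (∏ i, x i ^ d i) * ∑ l, x l ^ 2) (gmeas n) := by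
  have h1 : (fun x : Fin n → ℝ => (∏ i, x i ^ d i) * ∑ l, x l ^ 2)
      = fun x => ∑ l, (∏ i, x i ^ d i) * x l ^ 2 := by
    funext x; rw [Finset.mul_sum]
  rw [h1]
  exact integrable_finset_sum _ fun l _ => integrable_mono_mul_sq d l

lemma integral_mono_mul_S {n : ℕ} (d : Fin n → ℕ) :
    ∫ x, (∏ i, x i ^ d i) * (∑ l, x l ^ 2) ∂(gmeas n)
      = ((n : ℝ) + ∑ i, (d i : ℝ)) * ∏ i, gm (d i) := by
  have h1 : (fun x : Fin n → ℝ => (∏ i, x i ^ d i) * ∑ l, x l ^ 2)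
      = fun x => ∑ l, (∏ i, x i ^ d i) * x l ^ 2 := by
    funext x; rw [Finset.mul_sum]
  rw [h1, integral_finset_sum _ fun l _ => integrable_mono_mul_sq d l]
  have : ∀ l ∈ Finset.univ, (∫ x, (∏ i, x i ^ d i) * x l ^ 2 ∂(gmeas n))
      = ((d l : ℝ) + 1) * ∏ i, gm (d i) := fun l _ => integral_mono_mul_sq d l
  rw [Finset.sum_congr rfl this, ← Finset.sum_mul]
  congr 1
  rw [Finset.sum_add_distrib]
  simp [add_comm]

noncomputable def Ipoly {n : ℕ} (p : MvPolynomial (Fin n) ℝ) : ℝ :=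
  ∫ x, eval x p ∂(gmeas n)

lemma integrable_eval {n : ℕ} (p : MvPolynomial (Fin n) ℝ) :
    Integrable (fun x : Fin n → ℝ => eval x p) (gmeas n) := by
  have h1 : (fun x : Fin n → ℝ => eval x p)
      = fun x => ∑ d ∈ p.support, coeff d p * ∏ i, x i ^ d i := by
    funext x; rw [eval_eq']
  rw [h1]
  exact integrable_finset_sum _ fun d _ => (integrable_mono _).const_mul _

lemma Ipoly_eq {n : ℕ} (p : MvPolynomial (Fin n) ℝ) :
    Ipoly p = ∑ d ∈ p.support, coeff d p * ∏ i, gm (d i) := by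
  unfold Ipoly
  have h1 : (fun x : Fin n → ℝ => eval x p)
      = fun x => ∑ d ∈ p.support, coeff d p * ∏ i, x i ^ d i := by
    funext x; rw [eval_eq']
  rw [h1, integral_finset_sum _ fun d _ => (integrable_mono _).const_mul _]
  exact Finset.sum_congr rfl fun d _ => by rw [integral_const_mul, integral_monom]

lemma degree_eq {n m : ℕ} {p : MvPolynomial (Fin n) ℝ} (hp : p.IsHomogeneous m)
    {d : Fin n →₀ ℕ} (hd : d ∈ p.support) : ∑ i, d i = m := by
  have h := hp (MvPolynomial.mem_support_iff.mp hd)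
  rw [show (1 : Fin n → ℕ) = fun _ => 1 from rfl, ← Finsupp.degree_eq_weight_one] at h
  rw [← h]
  show ∑ i, d i = ∑ i ∈ d.support, d i
  exact (Finset.sum_subset (Finset.subset_univ _) fun i _ hi =>
    Finsupp.notMem_support_iff.mp hi).symm

lemma Ipoly_mul_S {n m : ℕ} {p : MvPolynomial (Fin n) ℝ} (hp : p.IsHomogeneous m) :
    Ipoly (p * Spoly n) = ((n : ℝ) + m) * Ipoly p := by
  unfold Ipoly
  have h1 : (fun x : Fin n → ℝ => eval x (p * Spoly n))
      = fun x => ∑ d ∈ p.support, coeff d p * ((∏ i, x i ^ d i) * ∑ l, x l ^ 2) := by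
    funext x
    rw [eval_mul, eval_Spoly, eval_eq', Finset.sum_mul]
    exact Finset.sum_congr rfl fun d _ => by ring
  rw [h1, integral_finset_sum _ fun d _ => (integrable_mono_mul_S _).const_mul _]
  have h2 : ∀ d ∈ p.support, (∫ x, coeff d p * ((∏ i, x i ^ d i) * ∑ l, x l ^ 2) ∂(gmeas n))
      = ((n : ℝ) + m) * (coeff d p * ∏ i, gm (d i)) := by
    intro d hd
    rw [integral_const_mul, integral_mono_mul_S]
    have : (∑ i, ((d i : ℕ) : ℝ)) = (m : ℝ) := by
      rw [← Nat.cast_sum, degree_eq hp hd]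
    rw [this]; ring
  rw [Finset.sum_congr rfl h2, ← Finset.mul_sum, ← Ipoly_eq]
  rfl

lemma Ipoly_mul_S_pow {n m : ℕ} {p : MvPolynomial (Fin n) ℝ} (hp : p.IsHomogeneous m) (k : ℕ) :
    Ipoly (p * Spoly n ^ k)
      = (∏ i ∈ Finset.range k, ((n : ℝ) + m + 2 * i)) * Ipoly p := by
  induction k with
  | zero => simp
  | succ k ih =>
      have hp' : (p * Spoly n ^ k).IsHomogeneous (m + 2 * k) := by
        have := hp.mul ((Spoly_hom n).pow k)
        simpa [mul_comm] using this
      have : p * Spoly n ^ (k + 1) = (p * Spoly n ^ k) * Spoly n := by ring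
      rw [this, Ipoly_mul_S hp', ih, Finset.prod_range_succ]
      push_cast
      ring

lemma Ipoly_one {n : ℕ} : Ipoly (1 : MvPolynomial (Fin n) ℝ) = 1 := by
  unfold Ipoly
  simp

lemma moment_sumsq {n : ℕ} (q : ℕ) :
    ∫ x, (∑ i, x i ^ 2) ^ q ∂(gmeas n) = ∏ i ∈ Finset.range q, ((n : ℝ) + 2 * i) := by
  have h1 : (fun x : Fin n → ℝ => (∑ i, x i ^ 2) ^ q)
      = fun x => eval x ((1 : MvPolynomial (Fin n) ℝ) * Spoly n ^ q) := by
    funext x; simp [eval_Spoly]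
  have h2 := Ipoly_mul_S_pow (MvPolynomial.isHomogeneous_one (Fin n) ℝ) q
  rw [Ipoly_one, mul_one] at h2
  calc ∫ x, (∑ i, x i ^ 2) ^ q ∂(gmeas n)
      = Ipoly ((1 : MvPolynomial (Fin n) ℝ) * Spoly n ^ q) := by rw [Ipoly]; rw [h1]
    _ = ∏ i ∈ Finset.range q, ((n : ℝ) + (0 : ℕ) + 2 * i) := h2
    _ = ∏ i ∈ Finset.range q, ((n : ℝ) + 2 * i) := by norm_num







noncomputable def Qp {n : ℕ} (M : Matrix (Fin n) (Fin n) ℝ) : MvPolynomial (Fin n) ℝ :=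
  ∑ i, ∑ j, C (M i j) * X i * X j

lemma eval_Qp {n : ℕ} (M : Matrix (Fin n) (Fin n) ℝ) (t : Fin n → ℝ) :
    eval t (Qp M) = quadForm M t := by
  simp only [Qp, quadForm, map_sum, map_mul, eval_C, eval_X]
  exact Finset.sum_congr rfl fun i _ => Finset.sum_congr rfl fun j _ => by ring

lemma Qp_hom {n : ℕ} (M : Matrix (Fin n) (Fin n) ℝ) : (Qp M).IsHomogeneous 2 :=
  IsHomogeneous.sum _ _ _ fun i _ => IsHomogeneous.sum _ _ _ fun j _ => by
    simpa using ((isHomogeneous_C (Fin n) (M i j)).mul (isHomogeneous_X ℝ i)).mul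
      (isHomogeneous_X ℝ j)

lemma quadForm_one {n : ℕ} (t : Fin n → ℝ) :
    quadForm (1 : Matrix (Fin n) (Fin n) ℝ) t = ∑ i, t i ^ 2 := by
  simp [quadForm, Matrix.one_apply, mul_ite, ite_mul, Finset.sum_ite_eq', sq]


/-- For `T ∼ N_n(0, I_n)`, symmetric `Θ`, and exponents `v_0, …, v_{N-1}` with
`v = Σ_j v_j`:
`E[∏_{j≥0}(TᵀΘʲT)^{v_j}]
   = E[‖T‖^{2v}] · E[∏_{j≥1}(TᵀΘʲT)^{v_j}] / E[‖T‖^{2(v−v_0)}]`. -/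
theorem stmt_16 (n N : ℕ) (Θ : Matrix (Fin n) (Fin n) ℝ) (hΘ : Θ.IsSymm)
    (v : ℕ → ℕ) :
    (∫ t : Fin n → ℝ, ∏ j ∈ Finset.range N, (quadForm (Θ ^ j) t) ^ (v j)
        ∂(Measure.pi fun _ : Fin n => gaussianReal 0 1)) =
      (∫ t : Fin n → ℝ, (∑ i, t i ^ 2) ^ (∑ j ∈ Finset.range N, v j)
          ∂(Measure.pi fun _ : Fin n => gaussianReal 0 1)) *
        (∫ t : Fin n → ℝ, ∏ j ∈ Finset.Ico 1 N, (quadForm (Θ ^ j) t) ^ (v j)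
            ∂(Measure.pi fun _ : Fin n => gaussianReal 0 1)) /
        (∫ t : Fin n → ℝ, (∑ i, t i ^ 2) ^ ((∑ j ∈ Finset.range N, v j) - v 0)
            ∂(Measure.pi fun _ : Fin n => gaussianReal 0 1)) := by
  rcases Nat.eq_zero_or_pos N with hN | hN
  · subst hN
    simp only [Finset.range_zero, Finset.prod_empty, Finset.sum_empty, Nat.zero_sub,
      pow_zero, Finset.Ico_self]
    rw [integral_const]
    simp
  -- N ≥ 1
  set d : ℕ := ∑ j ∈ Finset.Ico 1 N, v j with hd
  have hsplit : ∀ (f : ℕ → ℝ), ∏ j ∈ Finset.range N, f j = f 0 * ∏ j ∈ Finset.Ico 1 N, f j := by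
    intro f
    rw [Finset.range_eq_Ico, Finset.prod_eq_prod_Ico_succ_bot hN]
  have hsum : ∑ j ∈ Finset.range N, v j = v 0 + d := by
    rw [Finset.range_eq_Ico, Finset.sum_eq_sum_Ico_succ_bot hN]
  have hvsub : (∑ j ∈ Finset.range N, v j) - v 0 = d := by omega
  rw [hvsub, hsum]
  by_cases hzero : n = 0 ∧ 0 < d
  · -- degenerate case
    obtain ⟨hn0, hdpos⟩ := hzero
    subst hn0
    obtain ⟨j0, hj0mem, hj0⟩ : ∃ j0 ∈ Finset.Ico 1 N, 0 < v j0 := by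
      by_contra h
      push_neg at h
      have : d = 0 := Finset.sum_eq_zero fun j hj => Nat.le_zero.mp (h j hj)
      omega
    have hq : ∀ (M : Matrix (Fin 0) (Fin 0) ℝ) (t : Fin 0 → ℝ), quadForm M t = 0 := by
      intro M t; simp [quadForm]
    have hsum0 : ∀ t : Fin 0 → ℝ, (∑ i, t i ^ 2) = 0 := by intro t; simp
    simp only [hq, hsum0]
    have hIco : ∏ j ∈ Finset.Ico 1 N, (0 : ℝ) ^ v j = 0 :=
      Finset.prod_eq_zero hj0mem (by rw [zero_pow hj0.ne'])
    have hrange : ∏ j ∈ Finset.range N, (0 : ℝ) ^ v j = 0 :=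
      Finset.prod_eq_zero (Finset.mem_range.mpr (Finset.mem_Ico.mp hj0mem).2)
        (by rw [zero_pow hj0.ne'])
    rw [integral_const, integral_const, integral_const, integral_const]
    simp only [measure_univ, ENNReal.toReal_one, one_smul, smul_eq_mul, one_mul]
    rw [hIco, hrange, zero_pow (by omega : v 0 + d ≠ 0)]
    simp
  -- main case
  have hden : (∏ i ∈ Finset.range d, ((n : ℝ) + 2 * i)) ≠ 0 := by
    rcases Nat.eq_zero_or_pos d with hd0 | hdpos
    · rw [hd0]; simp
    · have hn : 0 < n := by
        rcases Nat.eq_zero_or_pos n with h | h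
        · exact absurd ⟨h, hdpos⟩ hzero
        · exact h
      refine Finset.prod_ne_zero_iff.mpr fun i _ => ?_
      have hn' : (0 : ℝ) < (n : ℝ) := by exact_mod_cast hn
      have : (0 : ℝ) < (n : ℝ) + 2 * i := by positivity
      exact ne_of_gt this
  set P : MvPolynomial (Fin n) ℝ := ∏ j ∈ Finset.Ico 1 N, (Qp (Θ ^ j)) ^ (v j) with hP
  have hPhom : P.IsHomogeneous (2 * d) := by
    have := IsHomogeneous.prod (Finset.Ico 1 N) (fun j => (Qp (Θ ^ j)) ^ (v j))
      (fun j => 2 * v j) (fun j _ => by simpa [mul_comm] using (Qp_hom (Θ ^ j)).pow (v j))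
    simpa [Finset.mul_sum, hd] using this
  have hevalP : ∀ t : Fin n → ℝ, eval t P = ∏ j ∈ Finset.Ico 1 N, (quadForm (Θ ^ j) t) ^ (v j) := by
    intro t
    rw [hP]
    simp [eval_Qp]
  -- LHS as Ipoly (P * S^(v 0))
  have hLHS : (∫ t : Fin n → ℝ, ∏ j ∈ Finset.range N, (quadForm (Θ ^ j) t) ^ (v j)
        ∂(gmeas n)) = Ipoly (P * Spoly n ^ (v 0)) := by
    rw [Ipoly]
    congr 1
    funext t
    rw [eval_mul, eval_pow, eval_Spoly, hevalP, hsplit fun j => (quadForm (Θ ^ j) t) ^ (v j)]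
    rw [pow_zero, quadForm_one]
    ring
  have hIP : (∫ t : Fin n → ℝ, ∏ j ∈ Finset.Ico 1 N, (quadForm (Θ ^ j) t) ^ (v j)
        ∂(gmeas n)) = Ipoly P := by
    rw [Ipoly]
    congr 1
    funext t
    rw [hevalP]
  rw [hLHS, hIP, Ipoly_mul_S_pow hPhom, moment_sumsq, moment_sumsq]
  -- arithmetic
  rw [show v 0 + d = d + v 0 by omega, Finset.prod_range_add]
  rw [eq_div_iff hden]
  have : ∀ i ∈ Finset.range (v 0), ((n : ℝ) + 2 * ↑(d + i)) = (n : ℝ) + ↑(2 * d) + 2 * ↑i := by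
    intro i _; push_cast; ring
  rw [Finset.prod_congr rfl this]
  ring
end
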